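/- For every m ∈ ℝ, the level line of ρ satisfies {X ∈ 𝒳 : ρ(X) = m} = bd_{−U}(𝒜 + ker π) − m·U. -/

import Mathlib

open Pointwise

/-- The risk measure associated with acceptance set `A`, eligible payoffs `M`
and pricing functional `π` (infimum in the extended reals, `sInf ∅ = +∞`). -/
noncomputable def rho {X : Type*} [AddCommGroup X] [Module ℝ X]
    (M : Submodule ℝ X) (π : M →ₗ[ℝ] ℝ) (A : Set X) (x : X) : EReal :=
  sInf {r : EReal | ∃ Z : M, x + (Z : X) ∈ A ∧ ((π Z : ℝ) : EReal) = r}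

/-- The kernel of the pricing functional `π`, viewed as a subset of `X`. -/
def kerSet {X : Type*} [AddCommGroup X] [Module ℝ X]
    (M : Submodule ℝ X) (π : M →ₗ[ℝ] ℝ) : Set X :=
  Subtype.val '' {Z : M | π Z = 0}

/-- `K`-directional closure of `S`. -/
def clK {X : Type*} [AddCommGroup X] [Module ℝ X] (K : X) (S : Set X) : Set X :=
  {x : X | ∀ l : ℝ, 0 < l → ∃ t : ℝ, 0 ≤ t ∧ t < l ∧ x - t • K ∈ S}

/-- `K`-directional interior of `S`. -/
def intK {X : Type*} [AddCommGroup X] [Module ℝ X] (K : X) (S : Set X) : Set X :=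
  {x : X | ∃ l : ℝ, 0 < l ∧ ∀ t : ℝ, 0 ≤ t → t ≤ l → x + t • K ∈ S}

/-- `K`-directional boundary of `S`. -/
def bdK {X : Type*} [AddCommGroup X] [Module ℝ X] (K : X) (S : Set X) : Set X :=
  clK K S \ intK K S

/-- Recession cone of `S`. -/
def recCone {X : Type*} [AddCommGroup X] [Module ℝ X] (S : Set X) : Set X :=
  {v : X | ∀ y ∈ S, ∀ l : ℝ, 0 ≤ l → y + l • v ∈ S}

theorem stmt_10 {X : Type*} [AddCommGroup X] [Module ℝ X]
(Xpos : Set X)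
    (hXpos0 : (0 : X) ∈ Xpos)
    (hXposSmul : ∀ t : ℝ, 0 ≤ t → ∀ x ∈ Xpos, t • x ∈ Xpos)
    (hXposConv : Convex ℝ Xpos)
    (hXposPointed : ∀ x ∈ Xpos, -x ∈ Xpos → x = 0)
    (M : Submodule ℝ X) (π : M →ₗ[ℝ] ℝ)
    (U : M) (hUpos : (U : X) ∈ Xpos) (hU1 : π U = 1)
    (A : Set X) (hA0 : (0 : X) ∈ A) (hAne : A ≠ Set.univ) (hAmono : A + Xpos ⊆ A) :
    ∀ m : ℝ,
      {x : X | rho M π A x = (m : EReal)}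
        = (fun y => y - m • (U : X)) '' bdK (-(U : X)) (A + kerSet M π) := by

  intro m
  ext x
  simp only [Set.mem_setOf_eq]
  set B : Set X := A + kerSet M π with hBdef
  have hBU : ∀ y ∈ B, ∀ t : ℝ, 0 ≤ t → y + t • (U : X) ∈ B := by
    rintro y hy t ht
    obtain ⟨a, ha, w, hw, rfl⟩ := hy
    exact ⟨a + t • (U : X),
      hAmono ⟨a, ha, t • (U : X), hXposSmul t ht _ hUpos, rfl⟩, w, hw, by abel_nf; exact add_left_comm _ _ _⟩
  set S : Set ℝ := {r : ℝ | x + r • (U : X) ∈ B} with hSdef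
  have hSup : ∀ r ∈ S, ∀ r' : ℝ, r ≤ r' → r' ∈ S := by
    intro r hr r' hrr
    have h1 := hBU _ hr (r' - r) (by linarith)
    have h2 : x + r • (U : X) + (r' - r) • (U : X) = x + r' • (U : X) := by module
    rw [h2] at h1
    exact h1
  have hrho : rho M π A x = sInf ((fun r : ℝ => (r : EReal)) '' S) := by
    unfold rho
    congr 1
    ext r
    constructor
    · rintro ⟨Z, hZ, rfl⟩
      refine ⟨π Z, ?_, rfl⟩
      refine ⟨x + (Z : X), hZ, (((π Z) • U - Z : M) : X), ⟨(π Z) • U - Z, ?_, rfl⟩, ?_⟩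
      · simp [hU1]
      · push_cast
        module
    · rintro ⟨r, hr, rfl⟩
      obtain ⟨a, ha, w, ⟨W, hW, rfl⟩, heq⟩ := hr
      refine ⟨r • U - W, ?_, ?_⟩
      · have : x + ((r • U - W : M) : X) = a := by
          push_cast
          have : x + r • (U : X) = a + (W : X) := heq.symm
          linear_combination (norm := module) this
        rw [this]; exact ha
      · have hW0 : π W = 0 := hW
        simp [hU1, hW0]
  have himg : x ∈ (fun y => y - m • (U : X)) '' bdK (-(U : X)) B ↔
      x + m • (U : X) ∈ bdK (-(U : X)) B := by
    constructor
    · rintro ⟨y, hy, rfl⟩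
      have : y - m • (U : X) + m • (U : X) = y := by abel
      rw [this]; exact hy
    · intro h
      exact ⟨x + m • (U : X), h, add_sub_cancel_right _ _⟩
  have key1 : ∀ t : ℝ, x + m • (U : X) - t • (-(U : X)) = x + (m + t) • (U : X) := by
    intro t; module
  have key2 : ∀ t : ℝ, x + m • (U : X) + t • (-(U : X)) = x + (m - t) • (U : X) := by
    intro t; module
  have hcl : x + m • (U : X) ∈ clK (-(U : X)) B ↔
      ∀ l : ℝ, 0 < l → ∃ t : ℝ, 0 ≤ t ∧ t < l ∧ (m + t) ∈ S := by
    unfold clK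
    simp only [Set.mem_setOf_eq, hSdef]
    constructor
    · intro h l hl
      obtain ⟨t, ht0, htl, htB⟩ := h l hl
      rw [key1 t] at htB
      exact ⟨t, ht0, htl, htB⟩
    · intro h l hl
      obtain ⟨t, ht0, htl, htB⟩ := h l hl
      exact ⟨t, ht0, htl, by rw [key1 t]; exact htB⟩
  have hint : x + m • (U : X) ∈ intK (-(U : X)) B ↔ ∃ r : ℝ, r < m ∧ r ∈ S := by
    unfold intK
    simp only [Set.mem_setOf_eq]
    constructor
    · rintro ⟨l, hl, h⟩
      refine ⟨m - l, by linarith, ?_⟩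
      have := h l (le_of_lt hl) le_rfl
      rw [key2 l] at this
      exact this
    · rintro ⟨r, hrm, hr⟩
      refine ⟨m - r, by linarith, fun t ht0 htl => ?_⟩
      rw [key2 t]
      exact hSup r hr (m - t) (by linarith)
  rw [hrho, himg]
  unfold bdK
  rw [Set.mem_diff, hcl, hint]
  constructor
  · intro h
    constructor
    · intro l hl
      have hlt : sInf ((fun r : ℝ => (r : EReal)) '' S) < ((m + l : ℝ) : EReal) := by
        rw [h]; exact_mod_cast (by linarith : m < m + l)
      obtain ⟨e, ⟨s, hs, rfl⟩, hsl⟩ := sInf_lt_iff.mp hlt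
      have hslr : s < m + l := by
        have : ((s : ℝ) : EReal) < ((m + l : ℝ) : EReal) := hsl
        exact_mod_cast this
      have hms : m ≤ s := by
        by_contra hc
        push_neg at hc
        have : sInf ((fun r : ℝ => (r : EReal)) '' S) ≤ (s : EReal) :=
          sInf_le ⟨s, hs, rfl⟩
        rw [h] at this
        exact absurd (by exact_mod_cast this) (not_le.mpr hc)
      refine ⟨s - m, by linarith, by linarith, ?_⟩
      have : m + (s - m) = s := by ring
      rw [this]; exact hs
    · rintro ⟨r, hrm, hr⟩
      have : sInf ((fun r : ℝ => (r : EReal)) '' S) ≤ (r : EReal) := sInf_le ⟨r, hr, rfl⟩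
      rw [h] at this
      exact absurd (by exact_mod_cast this) (not_le.mpr hrm)
  · rintro ⟨h1, h2⟩
    have hlow : (m : EReal) ≤ sInf ((fun r : ℝ => (r : EReal)) '' S) := by
      apply le_sInf
      rintro _ ⟨s, hs, rfl⟩
      by_contra hc
      push_neg at hc
      exact h2 ⟨s, by exact_mod_cast hc, hs⟩
    have hup : sInf ((fun r : ℝ => (r : EReal)) '' S) ≤ (m : EReal) := by
      by_contra hc
      push_neg at hc
      obtain ⟨c, hc1, hc2⟩ := EReal.exists_between_coe_real hc
      have hcm : m < c := by exact_mod_cast hc1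
      obtain ⟨t, ht0, htl, htS⟩ := h1 (c - m) (by linarith)
      have : sInf ((fun r : ℝ => (r : EReal)) '' S) ≤ ((m + t : ℝ) : EReal) :=
        sInf_le ⟨m + t, htS, rfl⟩
      have hlt : ((m + t : ℝ) : EReal) < (c : EReal) := by exact_mod_cast (by linarith : m + t < c)
      exact absurd (lt_of_le_of_lt this hlt) (not_lt.mpr (le_of_lt hc2))
    exact le_antisymm hup hlow
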